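/- For any modal formula A and any natural number s with s > cx(A), the following are equivalent: (1) GL_ω proves ¬□A, where GL_ω = GL + {◇^n⊤ : n ∈ ω}; (2) GL + {¬(□^{s+1}⊥ → □^s⊥)} proves ¬□A. -/

import Mathlib

/-- Modal propositional formulas (variables are indexed by `ℕ`). -/
inductive MF : Type
  | var : ℕ → MF
  | fal : MF
  | imp : MF → MF → MF
  | box : MF → MF
deriving DecidableEq

namespace MF

def neg (A : MF) : MF := imp A fal
def top : MF := neg fal
def conj (A B : MF) : MF := neg (imp A (neg B))
def disj (A B : MF) : MF := imp (neg A) B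
def biimp (A B : MF) : MF := conj (imp A B) (imp B A)
def dia (A : MF) : MF := neg (box (neg A))
def boxn : ℕ → MF → MF
  | 0, A => A
  | n+1, A => box (boxn n A)
def dian (n : ℕ) (A : MF) : MF := neg (boxn n (neg A))

/-- Uniform substitution. -/
def subst (s : ℕ → MF) : MF → MF
  | var n => s n
  | fal => fal
  | imp A B => imp (subst s A) (subst s B)
  | box A => box (subst s A)

/-- The set of subformulas. -/
def subF : MF → Finset MF
  | var n => {var n}
  | fal => {fal}
  | imp A B => insert (imp A B) (subF A ∪ subF B)
  | box A => insert (box A) (subF A)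

def isBox : MF → Bool
  | box _ => true
  | _ => false

def unbox : MF → MF
  | box A => A
  | A => A

/-- `cx A` is the number of subformulas of `A` of the form `□C`. -/
def cx (A : MF) : ℕ := ((subF A).filter (fun B => isBox B = true)).card

/-- `Rf(A) = {□B → B : □B ∈ Sub(A)}`. -/
def RfSet (A : MF) : Finset MF :=
  ((subF A).filter (fun B => isBox B = true)).image (fun B => imp B (unbox B))

/-- Conjunction of a finite set of formulas. -/
noncomputable def conjFin (s : Finset MF) : MF := s.toList.foldr conj top

/-- `A` is an instance of a propositional tautology. -/
def TautInst (A : MF) : Prop :=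
  ∀ v : MF → Bool, (∀ B C, v (imp B C) = (!(v B) || v C)) → v fal = false → v A = true

end MF

/-- Provability in the Gödel–Löb logic GL. -/
inductive GLPrv : MF → Prop
  | taut {A} : MF.TautInst A → GLPrv A
  | k (A B : MF) : GLPrv (MF.imp (MF.box (MF.imp A B)) (MF.imp (MF.box A) (MF.box B)))
  | lob (A : MF) : GLPrv (MF.imp (MF.box (MF.imp (MF.box A) A)) (MF.box A))
  | mp {A B} : GLPrv (MF.imp A B) → GLPrv A → GLPrv B
  | nec {A} : GLPrv A → GLPrv (MF.box A)

/-- Provability in GL + Γ: axioms are GL-theorems and substitution instances of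
formulas in Γ; rules are modus ponens (and substitution, built into the axiom rule). -/
inductive ExtPrv (Ax : Set MF) : MF → Prop
  | gl {A} : GLPrv A → ExtPrv Ax A
  | ax {A} (s : ℕ → MF) : A ∈ Ax → ExtPrv Ax (A.subst s)
  | mp {A B} : ExtPrv Ax (MF.imp A B) → ExtPrv Ax A → ExtPrv Ax B

/-- GL_ω = GL + {◇ⁿ⊤ : n ∈ ω}. -/
def GLomegaPrv : MF → Prop := ExtPrv (Set.range fun n => MF.dian n MF.top)

/-- GLS = GL + {□p → p}. -/
def GLSPrv : MF → Prop := ExtPrv {MF.imp (MF.box (MF.var 0)) (MF.var 0)}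

/-- F_s = □^{s+1}⊥ → □^s⊥. -/
def Fmla (s : ℕ) : MF := MF.imp (MF.boxn (s+1) MF.fal) (MF.boxn s MF.fal)

/-- GL + {¬F_s}. -/
def GLFPrv (s : ℕ) : MF → Prop := ExtPrv {MF.neg (Fmla s)}

section Toolkit
open MF

/-! ### Propositional tautology instances -/

lemma taut_id (A : MF) : GLPrv (imp A A) :=
  .taut fun v hv _ => by cases hA : v A <;> simp [hv, hA]

lemma taut_k (A B : MF) : GLPrv (imp B (imp A B)) :=
  .taut fun v hv _ => by cases hA : v A <;> cases hB : v B <;> simp [hv, hA, hB]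

lemma taut_s (A B C : MF) :
    GLPrv (imp (imp A (imp B C)) (imp (imp A B) (imp A C))) :=
  .taut fun v hv _ => by
    cases hA : v A <;> cases hB : v B <;> cases hC : v C <;> simp [hv, hA, hB, hC]

lemma taut_exfalso (A : MF) : GLPrv (imp fal A) :=
  .taut fun v hv hf => by simp [hv, hf]

lemma taut_dne (A : MF) : GLPrv (imp (imp (imp A fal) fal) A) :=
  .taut fun v hv hf => by cases hA : v A <;> simp [hv, hf, hA]

lemma taut_cases (A X : MF) :
    GLPrv (imp (imp A X) (imp (imp (imp A fal) X) X)) :=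
  .taut fun v hv hf => by cases hA : v A <;> cases hX : v X <;> simp [hv, hf, hA, hX]

lemma taut_swap (A C X : MF) :
    GLPrv (imp (imp A (imp C X)) (imp C (imp A X))) :=
  .taut fun v hv _ => by
    cases hA : v A <;> cases hC : v C <;> cases hX : v X <;> simp [hv, hA, hC, hX]

lemma taut_contra1 (X Y : MF) : GLPrv (imp (imp X Y) (imp (neg Y) (neg X))) :=
  .taut fun v hv hf => by
    cases hX : v X <;> cases hY : v Y <;> simp [MF.neg, hv, hf, hX, hY]

lemma taut_contra2 (X Y : MF) : GLPrv (imp (imp (neg X) (neg Y)) (imp Y X)) :=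
  .taut fun v hv hf => by
    cases hX : v X <;> cases hY : v Y <;> simp [MF.neg, hv, hf, hX, hY]

lemma taut_negtop_fal : GLPrv (imp (neg top) fal) :=
  .taut fun v hv hf => by simp [MF.neg, MF.top, hv, hf]

lemma taut_fal_negtop : GLPrv (imp fal (neg top)) :=
  .taut fun v hv hf => by simp [MF.neg, MF.top, hv, hf]

lemma taut_conj_intro (A B : MF) : GLPrv (imp A (imp B (conj A B))) :=
  .taut fun v hv hf => by
    cases hA : v A <;> cases hB : v B <;> simp [MF.conj, MF.neg, hv, hf, hA, hB]

lemma taut_conj_left (A B : MF) : GLPrv (imp (conj A B) A) :=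
  .taut fun v hv hf => by
    cases hA : v A <;> cases hB : v B <;> simp [MF.conj, MF.neg, hv, hf, hA, hB]

lemma taut_conj_right (A B : MF) : GLPrv (imp (conj A B) B) :=
  .taut fun v hv hf => by
    cases hA : v A <;> cases hB : v B <;> simp [MF.conj, MF.neg, hv, hf, hA, hB]

lemma taut_neg_imp (A B : MF) : GLPrv (imp (neg A) (imp A B)) :=
  .taut fun v hv hf => by
    cases hA : v A <;> cases hB : v B <;> simp [MF.neg, hv, hf, hA, hB]


lemma taut_weak (A c X : MF) : GLPrv (imp (imp A X) (imp A (imp c X))) :=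
  .taut fun v hv _ => by
    cases hA : v A <;> cases hc : v c <;> cases hX : v X <;> simp [hv, hA, hc, hX]

lemma taut_lift2 (c P Q R : MF) :
    GLPrv (imp (imp P (imp Q R)) (imp (imp c P) (imp (imp c Q) (imp c R)))) :=
  .taut fun v hv _ => by
    cases hc : v c <;> cases hP : v P <;> cases hQ : v Q <;> cases hR : v R <;>
      simp [hv, hc, hP, hQ, hR]

lemma taut_dedswap (a c P Q : MF) :
    GLPrv (imp (imp (imp a P) Q) (imp (imp a (imp c P)) (imp c Q))) :=
  .taut fun v hv _ => by
    cases ha : v a <;> cases hc : v c <;> cases hP : v P <;> cases hQ : v Q <;>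
      simp [hv, ha, hc, hP, hQ]

/-! ### Contexts: iterated implications -/

def imps (L : List MF) (B : MF) : MF := L.foldr MF.imp B

@[simp] lemma imps_nil (B : MF) : imps [] B = B := rfl
@[simp] lemma imps_cons (a : MF) (L : List MF) (B : MF) :
    imps (a :: L) B = imp a (imps L B) := rfl
lemma imps_append (L M : List MF) (B : MF) :
    imps (L ++ M) B = imps L (imps M B) := by
  simp [imps]

lemma imps_of {B : MF} (L : List MF) (h : GLPrv B) : GLPrv (imps L B) := by
  induction L with
  | nil => exact h
  | cons a L ih => exact .mp (taut_k a _) ih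

lemma imps_internal_mp (L : List MF) (A B : MF) :
    GLPrv (imp (imps L (imp A B)) (imp (imps L A) (imps L B))) := by
  induction L with
  | nil => exact taut_id _
  | cons c L ih => exact .mp (taut_lift2 c _ _ _) ih

lemma imps_mp {L : List MF} {A B : MF} (h1 : GLPrv (imps L (imp A B)))
    (h2 : GLPrv (imps L A)) : GLPrv (imps L B) :=
  .mp (.mp (imps_internal_mp L A B) h1) h2

lemma imp_imps_k (A : MF) (L : List MF) : GLPrv (imp A (imps L A)) := by
  induction L with
  | nil => exact taut_id A
  | cons c L ih => exact .mp (taut_weak A c (imps L A)) ih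

lemma imps_ax {L : List MF} {A : MF} (h : A ∈ L) : GLPrv (imps L A) := by
  induction L with
  | nil => simp at h
  | cons a L ih =>
    rcases List.mem_cons.1 h with rfl | h
    · exact imp_imps_k A L
    · exact .mp (taut_k a _) (ih h)

lemma imps_swap_thm (a B : MF) (L : List MF) :
    GLPrv (imp (imp a (imps L B)) (imps L (imp a B))) := by
  induction L with
  | nil => exact taut_id _
  | cons c L ih => exact .mp (taut_dedswap a c (imps L B) (imps L (imp a B))) ih

lemma deduction_inv {a B : MF} {L : List MF} (h : GLPrv (imp a (imps L B))) :
    GLPrv (imps L (imp a B)) := .mp (imps_swap_thm a B L) h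

lemma imps_mp_all {L M : List MF} {B : MF} (h : GLPrv (imps L (imps M B)))
    (hM : ∀ m ∈ M, GLPrv (imps L m)) : GLPrv (imps L B) := by
  induction M with
  | nil => exact h
  | cons c M ih =>
    refine ih (imps_mp h (hM c (by simp))) fun m hm => hM m (by simp [hm])

lemma imps_subset {L L' : List MF} {B : MF} (h : GLPrv (imps L B))
    (hsub : ∀ a ∈ L, a ∈ L') : GLPrv (imps L' B) := by
  have h0 : GLPrv (imps L' (imps L B)) := imps_of _ h
  exact imps_mp_all h0 fun m hm => imps_ax (hsub m hm)

lemma imps_fal {L : List MF} {A : MF} (h1 : GLPrv (imps L (neg A)))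
    (h2 : GLPrv (imps L A)) : GLPrv (imps L fal) := imps_mp h1 h2

end Toolkit
section Modal
open MF

lemma box_mono {A B : MF} (h : GLPrv (imp A B)) :
    GLPrv (imp (box A) (box B)) := .mp (.k A B) (.nec h)

lemma boxn_add (n k : ℕ) (A : MF) : boxn (n + k) A = boxn k (boxn n A) := by
  induction k with
  | zero => rfl
  | succ k ih => simp [boxn, ih]

lemma boxn_mono {A B : MF} (h : GLPrv (imp A B)) (n : ℕ) :
    GLPrv (imp (boxn n A) (boxn n B)) := by
  induction n with
  | zero => exact h
  | succ n ih => exact box_mono ih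

lemma imp_trans {A B C : MF} (h1 : GLPrv (imp A B)) (h2 : GLPrv (imp B C)) :
    GLPrv (imp A C) := by
  have : GLPrv (imps [A] C) := imps_mp (imps_of _ h2) (imps_mp (imps_of _ h1) (imps_ax (by simp)))
  exact this

lemma box4 (A : MF) : GLPrv (imp (box A) (box (box A))) := by
  set B := conj A (box A) with hB
  have hBA : GLPrv (imp B A) := taut_conj_left A (box A)
  have hBbA : GLPrv (imp B (box A)) := taut_conj_right A (box A)
  -- ⊢ A → (□B → B)
  have h1 : GLPrv (imps [A, box B] B) := by
    refine imps_mp (imps_mp (imps_of _ (taut_conj_intro A (box A))) (imps_ax (by simp))) ?_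
    exact imps_mp (imps_of _ (box_mono hBA)) (imps_ax (by simp))
  have h2 : GLPrv (imp A (imp (box B) B)) := h1
  have h3 : GLPrv (imp (box A) (box B)) :=
    imp_trans (box_mono h2) (.lob B)
  exact imp_trans h3 (box_mono hBbA)

lemma boxn_fal_mono {n m : ℕ} (h : n ≤ m) :
    GLPrv (imp (boxn n fal) (boxn m fal)) := by
  obtain ⟨k, rfl⟩ := Nat.le.dest h
  have : GLPrv (imp fal (boxn k fal)) := taut_exfalso _
  have h2 := boxn_mono this n
  rw [← boxn_add, Nat.add_comm] at h2
  exact h2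

/-- `⊢ ◇^m⊤ → ◇^n⊤` for `n ≤ m`. -/
lemma dian_top_mono {n m : ℕ} (h : n ≤ m) :
    GLPrv (imp (dian m top) (dian n top)) := by
  have key : GLPrv (imp (boxn n (neg top)) (boxn m (neg top))) := by
    obtain ⟨k, rfl⟩ := Nat.le.dest h
    have h1 : GLPrv (imp (neg top) (boxn k (neg top))) := by
      cases k with
      | zero => exact taut_id _
      | succ k =>
        exact imp_trans taut_negtop_fal (imp_trans (taut_exfalso (boxn (k+1) (neg top))) (taut_id _))
    have h2 := boxn_mono h1 n
    rw [← boxn_add, Nat.add_comm] at h2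
    exact h2
  exact .mp (taut_contra1 _ _) key

/-- from `⊢ ◇^N⊤ → ¬□A` get `⊢ □A → □^N⊥`. -/
lemma boxfal_of_dian {N : ℕ} {A : MF} (h : GLPrv (imp (dian N top) (neg (box A)))) :
    GLPrv (imp (box A) (boxn N fal)) := by
  have h1 : GLPrv (imp (box A) (boxn N (neg top))) := .mp (taut_contra2 _ _) h
  exact imp_trans h1 (boxn_mono taut_negtop_fal N)

/-- from `⊢ □A → □^N⊥` get `⊢ ◇^N⊤ → ¬□A`. -/
lemma dian_of_boxfal {N : ℕ} {A : MF} (h : GLPrv (imp (box A) (boxn N fal))) :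
    GLPrv (imp (dian N top) (neg (box A))) := by
  have h1 : GLPrv (imp (box A) (boxn N (neg top))) :=
    imp_trans h (boxn_mono taut_fal_negtop N)
  exact .mp (taut_contra1 _ _) h1

/-- The Löb trick: from `⊢ □A → (□^{s+1}⊥ → □^s⊥)` conclude `⊢ □A → □^{s+1}⊥`. -/
lemma lob_trick {A : MF} {s : ℕ} (h : GLPrv (imp (box A) (Fmla s))) :
    GLPrv (imp (box A) (boxn (s+1) fal)) := by
  set C : MF := imp (box A) (boxn s fal) with hC
  have hk : GLPrv (imp (box C) (imp (box (box A)) (boxn (s+1) fal))) := .k (box A) (boxn s fal)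
  have h4 : GLPrv (imp (box A) (box (box A))) := box4 A
  -- ⊢ □C → C
  have hCC : GLPrv (imps [box C, box A] (boxn s fal)) := by
    have hbb : GLPrv (imps [box C, box A] (box (box A))) :=
      imps_mp (imps_of _ h4) (imps_ax (by simp))
    have hs1 : GLPrv (imps [box C, box A] (boxn (s+1) fal)) :=
      imps_mp (imps_mp (imps_of _ hk) (imps_ax (by simp))) hbb
    have hF : GLPrv (imps [box C, box A] (Fmla s)) :=
      imps_mp (imps_of _ h) (imps_ax (by simp))
    exact imps_mp hF hs1
  have hlob : GLPrv (box C) := .mp (.lob C) (.nec hCC)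
  have : GLPrv (imps [box A] (boxn (s+1) fal)) := by
    have hbb : GLPrv (imps [box A] (box (box A))) :=
      imps_mp (imps_of _ h4) (imps_ax (by simp))
    exact imps_mp (imps_mp (imps_of _ hk) (imps_of _ hlob)) hbb
  exact this

end Modal
section Deduction
open MF

lemma extprv_deduction {Ax : Set MF} {B : MF} (h : ExtPrv Ax B) :
    ∃ L : List MF, (∀ C ∈ L, ∃ D ∈ Ax, ∃ σ, C = MF.subst σ D) ∧ GLPrv (imps L B) := by
  induction h with
  | gl h => exact ⟨[], by simp, h⟩
  | ax σ hD => exact ⟨[_], by rintro C hC; simp at hC; exact ⟨_, hD, σ, hC⟩, imps_ax (by simp)⟩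
  | mp h1 h2 ih1 ih2 =>
    obtain ⟨L1, hm1, hp1⟩ := ih1
    obtain ⟨L2, hm2, hp2⟩ := ih2
    refine ⟨L1 ++ L2, ?_, ?_⟩
    · intro C hC; rcases List.mem_append.1 hC with h | h
      exacts [hm1 C h, hm2 C h]
    · exact imps_mp (imps_subset hp1 (by intro a ha; simp [ha]))
        (imps_subset hp2 (by intro a ha; simp [ha]))

lemma extprv_of_imp {Ax : Set MF} {D B : MF} (hD : D ∈ Ax) (hcl : ∀ σ, MF.subst σ D = D)
    (h : GLPrv (imp D B)) : ExtPrv Ax B :=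
  .mp (.gl h) (by have := ExtPrv.ax (Ax := Ax) (A := D) MF.var hD; rwa [hcl] at this)

lemma subst_boxn (σ : ℕ → MF) (n : ℕ) (A : MF) :
    MF.subst σ (boxn n A) = boxn n (MF.subst σ A) := by
  induction n with
  | zero => rfl
  | succ n ih => simp [boxn, MF.subst, ih]

lemma subst_dian_top (σ : ℕ → MF) (n : ℕ) : MF.subst σ (dian n top) = dian n top := by
  simp [dian, MF.neg, MF.top, MF.subst, subst_boxn]

lemma subst_negFmla (σ : ℕ → MF) (s : ℕ) : MF.subst σ (neg (Fmla s)) = neg (Fmla s) := by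
  simp [Fmla, MF.neg, MF.subst, subst_boxn]

/-- GL_ω proves B iff some single `◇^N⊤` implies it in GL. -/
lemma glomega_iff (B : MF) :
    GLomegaPrv B ↔ ∃ N, GLPrv (imp (dian N top) B) := by
  constructor
  · intro h
    obtain ⟨L, hm, hp⟩ := extprv_deduction h
    have hL : ∀ C ∈ L, ∃ n, C = dian n top := by
      intro C hC
      obtain ⟨D, hD, σ, rfl⟩ := hm C hC
      obtain ⟨n, rfl⟩ := hD
      exact ⟨n, subst_dian_top σ n⟩
    clear hm h
    induction L generalizing B with
    | nil => exact ⟨0, .mp (taut_k _ _) hp⟩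
    | cons C L ih =>
      obtain ⟨n, hCn⟩ := hL C (by simp)
      subst hCn
      have h2 : GLPrv (imps L (imp (dian n top) B)) := deduction_inv hp
      obtain ⟨N', hN'⟩ := ih _ h2 (fun C hC => hL C (List.mem_cons_of_mem _ hC))
      refine ⟨max N' n, ?_⟩
      have ha : GLPrv (imp (dian (max N' n) top) (imp (dian n top) B)) :=
        imp_trans (dian_top_mono (le_max_left N' n)) hN'
      have hb : GLPrv (imp (dian (max N' n) top) (dian n top)) :=
        dian_top_mono (le_max_right N' n)
      exact .mp (.mp (taut_s _ _ _) ha) hb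
  · rintro ⟨N, h⟩
    exact extprv_of_imp ⟨N, rfl⟩ (fun σ => subst_dian_top σ N) h

lemma glf_iff (s : ℕ) (B : MF) :
    GLFPrv s B ↔ GLPrv (imp (neg (Fmla s)) B) := by
  constructor
  · intro h
    obtain ⟨L, hm, hp⟩ := extprv_deduction h
    have hL : ∀ C ∈ L, C = neg (Fmla s) := by
      intro C hC
      obtain ⟨D, hD, σ, rfl⟩ := hm C hC
      simp only [GLFPrv, Set.mem_singleton_iff] at hD
      subst hD; exact subst_negFmla σ s
    have : GLPrv (imps [neg (Fmla s)] B) := imps_subset hp (by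
      intro a ha; simp [hL a ha])
    exact this
  · intro h
    exact extprv_of_imp rfl (fun σ => subst_negFmla σ s) h

end Deduction
section Semantics
open MF
open Classical in
/-- Transitive, conversely well-founded Kripke models. -/
structure KModel where
  W : Type
  R : W → W → Prop
  V : ℕ → W → Bool
  trans : ∀ {a b c}, R a b → R b c → R a c
  cwf : WellFounded (fun x y => R y x)

open Classical in
noncomputable def KModel.eval (M : KModel) (w : M.W) : MF → Bool
  | .var n => M.V n w
  | .fal => false
  | .imp A B => !(M.eval w A) || M.eval w B
  | .box A => decide (∀ u, M.R w u → M.eval u A = true)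

@[simp] lemma KModel.eval_fal (M : KModel) (w : M.W) : M.eval w fal = false := rfl
@[simp] lemma KModel.eval_imp (M : KModel) (w : M.W) (A B : MF) :
    M.eval w (imp A B) = (!(M.eval w A) || M.eval w B) := rfl
lemma KModel.eval_box (M : KModel) (w : M.W) (A : MF) :
    M.eval w (box A) = true ↔ ∀ u, M.R w u → M.eval u A = true := by
  simp [KModel.eval]

lemma KModel.eval_imp_true (M : KModel) (w : M.W) (A B : MF) :
    M.eval w (imp A B) = true ↔ (M.eval w A = true → M.eval w B = true) := by
  simp only [KModel.eval_imp, Bool.or_eq_true, Bool.not_eq_true']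
  rcases Bool.eq_false_or_eq_true (M.eval w A) with h | h <;> simp [h]

lemma KModel.asymm (M : KModel) {a b : M.W} (h : M.R a b) : ¬ M.R b a :=
  fun h' => M.cwf.asymmetric b a h h'

lemma KModel.irrefl (M : KModel) (w : M.W) : ¬ M.R w w :=
  fun h => M.asymm h h


/-- Persistence of boxed formulas along R. -/
lemma KModel.box_persist (M : KModel) {u v : M.W} (h : M.R u v) {A : MF}
    (hA : M.eval u (box A) = true) :
    M.eval v (box A) = true ∧ M.eval v A = true := by
  rw [M.eval_box] at hA ⊢
  exact ⟨fun z hz => hA z (M.trans h hz), hA v h⟩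

/-- Soundness of GL. -/
theorem gl_soundness {A : MF} (h : GLPrv A) (M : KModel) (w : M.W) :
    M.eval w A = true := by
  induction h generalizing w with
  | taut h => exact h (M.eval w) (fun B C => rfl) rfl
  | k A B =>
    rw [KModel.eval_imp_true, KModel.eval_box]
    intro h1
    rw [KModel.eval_imp_true, KModel.eval_box]
    intro h2
    rw [KModel.eval_box]
    intro u hu
    have := h1 u hu
    rw [KModel.eval_imp_true] at this
    exact this (h2 u hu)
  | lob A =>
    rw [KModel.eval_imp_true, KModel.eval_box, KModel.eval_box]
    intro h1
    intro u hu
    induction (M.cwf.apply u) with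
    | _ u _ ih =>
      have h2 := h1 u hu
      rw [KModel.eval_imp_true, KModel.eval_box] at h2
      exact h2 (fun z hz => ih z hz (M.trans hu hz))
  | mp h1 h2 ih1 ih2 =>
    have := ih1 w
    rw [KModel.eval_imp_true] at this
    exact this (ih2 w)
  | nec h ih =>
    rw [KModel.eval_box]; intro u _; exact ih u
section Canonical
open MF

lemma mem_subF_self (A : MF) : A ∈ subF A := by
  cases A <;> simp [subF]

lemma subF_closed : ∀ {A B : MF}, B ∈ subF A → subF B ⊆ subF A := by
  intro A
  induction A with
  | var n => intro B hB; simp [subF] at hB; subst hB; simp [subF]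
  | fal => intro B hB; simp [subF] at hB; subst hB; simp [subF]
  | imp A1 A2 ih1 ih2 =>
    intro B hB
    simp only [subF, Finset.mem_insert, Finset.mem_union] at hB
    rcases hB with rfl | h | h
    · exact subset_rfl
    · exact (ih1 h).trans (by intro x hx; simp [subF]; tauto)
    · exact (ih2 h).trans (by intro x hx; simp [subF]; tauto)
  | box A ih =>
    intro B hB
    simp only [subF, Finset.mem_insert] at hB
    rcases hB with rfl | h
    · exact subset_rfl
    · exact (ih h).trans (by intro x hx; simp [subF]; tauto)

lemma mem_subF_imp_left (B C : MF) : B ∈ subF (imp B C) := by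
  simp [subF]; right; left; exact mem_subF_self B
lemma mem_subF_imp_right (B C : MF) : C ∈ subF (imp B C) := by
  simp [subF]; right; right; exact mem_subF_self C
lemma mem_subF_box (B : MF) : B ∈ subF (box B) := by
  simp [subF]; right; exact mem_subF_self B

lemma eq_box_unbox_of_isBox {D : MF} (h : isBox D = true) : D = MF.box (MF.unbox D) := by
  cases D <;> simp [isBox] at h ⊢ <;> rfl

/-! ### ConGLsistency -/

def ConGL (L : List MF) : Prop := ¬ GLPrv (imps L fal)

lemma con_of_subset {L L' : List MF} (h : ConGL L') (hs : ∀ a ∈ L, a ∈ L') : ConGL L :=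
  fun hf => h (imps_subset hf hs)

lemma not_con_of_mem {L : List MF} {a : MF} (h1 : a ∈ L) (h2 : MF.neg a ∈ L) : ¬ ConGL L :=
  fun hc => hc (imps_fal (imps_ax h2) (imps_ax h1))

lemma con_cases {L : List MF} (hcon : ConGL L) (B : MF) : ConGL (B :: L) ∨ ConGL (neg B :: L) := by
  by_contra h
  push_neg at h
  obtain ⟨h1, h2⟩ := h
  rw [ConGL, not_not] at h1 h2
  exact hcon (.mp (.mp (taut_cases B (imps L fal)) h1) h2)

/-! ### ConGLtexts -/

noncomputable def ctx (Φ S : Finset MF) : List MF := S.toList ++ ((Φ \ S).toList.map MF.neg)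

lemma mem_ctx_pos {Φ S : Finset MF} {B : MF} (h : B ∈ S) : B ∈ ctx Φ S := by
  simp [ctx, h]

lemma mem_ctx_neg {Φ S : Finset MF} {B : MF} (h : B ∈ Φ) (h2 : B ∉ S) :
    MF.neg B ∈ ctx Φ S := by
  simp [ctx]; right; exact ⟨B, ⟨h, h2⟩, rfl⟩

/-! ### Lindenbaum -/

lemma lindenbaum_list (l : List MF) (L : List MF) (h : ConGL L) :
    ∃ L' : List MF, (∀ B ∈ l, B ∈ L' ∨ MF.neg B ∈ L') ∧ ConGL (L' ++ L) := by
  induction l with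
  | nil => exact ⟨[], by simp, h⟩
  | cons B l ih =>
    obtain ⟨L', h1, h2⟩ := ih
    rcases con_cases h2 B with hc | hc
    · refine ⟨B :: L', ?_, hc⟩
      intro C hC
      rcases List.mem_cons.1 hC with rfl | hC
      · exact Or.inl (by simp)
      · rcases h1 C hC with h | h
        exacts [Or.inl (by simp [h]), Or.inr (by simp [h])]
    · refine ⟨MF.neg B :: L', ?_, hc⟩
      intro C hC
      rcases List.mem_cons.1 hC with rfl | hC
      · exact Or.inr (by simp)
      · rcases h1 C hC with h | h
        exacts [Or.inl (by simp [h]), Or.inr (by simp [h])]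

lemma lindenbaum (Φ : Finset MF) (L : List MF) (h : ConGL L) :
    ∃ S : Finset MF, S ⊆ Φ ∧ ConGL (ctx Φ S ++ L) := by
  classical
  obtain ⟨L', h1, h2⟩ := lindenbaum_list Φ.toList L h
  refine ⟨Φ.filter (fun B => B ∈ L'), Finset.filter_subset _ _, ?_⟩
  refine con_of_subset h2 ?_
  intro a ha
  rcases List.mem_append.1 ha with ha | ha
  · rcases List.mem_append.1 ha with ha | ha
    · rw [Finset.mem_toList, Finset.mem_filter] at ha
      exact List.mem_append.2 (Or.inl ha.2)
    · obtain ⟨b, hb, rfl⟩ := List.mem_map.1 ha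
      rw [Finset.mem_toList, Finset.mem_sdiff, Finset.mem_filter] at hb
      have hbΦ : b ∈ Φ := hb.1
      have hbL' : b ∉ L' := fun hmem => hb.2 ⟨hbΦ, hmem⟩
      rcases h1 b (Finset.mem_toList.2 hbΦ) with h | h
      · exact absurd h hbL'
      · exact List.mem_append.2 (Or.inl h)
  · exact List.mem_append.2 (Or.inr ha)

/-! ### The canonical model -/

def CWorld (Φ : Finset MF) : Type := {S : Finset MF // S ⊆ Φ ∧ ConGL (ctx Φ S)}

def CR (Φ : Finset MF) (X Y : CWorld Φ) : Prop :=
  (∀ B : MF, MF.box B ∈ X.1 → MF.box B ∈ Y.1 ∧ B ∈ Y.1) ∧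
    ∃ B : MF, MF.box B ∈ Y.1 ∧ MF.box B ∉ X.1

lemma CR_trans {Φ : Finset MF} {X Y Z : CWorld Φ} (h1 : CR Φ X Y) (h2 : CR Φ Y Z) :
    CR Φ X Z := by
  obtain ⟨ha, hb⟩ := h1
  obtain ⟨hc, hd⟩ := h2
  refine ⟨fun B hB => hc B (ha B hB).1, ?_⟩
  obtain ⟨B, hB1, hB2⟩ := hb
  exact ⟨B, (hc B hB1).1, hB2⟩

lemma CR_card_lt {Φ : Finset MF} {X Y : CWorld Φ} (h : CR Φ X Y) :
    (X.1.filter (fun D => isBox D = true)).card < (Y.1.filter (fun D => isBox D = true)).card := by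
  classical
  apply Finset.card_lt_card
  rw [Finset.ssubset_iff_of_subset]
  · obtain ⟨B, hB1, hB2⟩ := h.2
    exact ⟨MF.box B, Finset.mem_filter.2 ⟨hB1, rfl⟩, by simp [Finset.mem_filter, hB2]⟩
  · intro D hD
    rw [Finset.mem_filter] at hD
    obtain ⟨hD1, hD2⟩ := hD
    have := (h.1 (MF.unbox D) (by rwa [← eq_box_unbox_of_isBox hD2])).1
    rw [← eq_box_unbox_of_isBox hD2] at this
    exact Finset.mem_filter.2 ⟨this, hD2⟩

lemma CR_cwf (Φ : Finset MF) : WellFounded (fun X Y : CWorld Φ => CR Φ Y X) := by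
  classical
  have : Subrelation (fun X Y : CWorld Φ => CR Φ Y X)
      (InvImage (· < ·) (fun X : CWorld Φ =>
        (Φ.filter (fun D => isBox D = true)).card - (X.1.filter (fun D => isBox D = true)).card)) := by
    intro X Y h
    have h1 := CR_card_lt h
    have h2 : (X.1.filter (fun D => isBox D = true)).card ≤ (Φ.filter (fun D => isBox D = true)).card :=
      Finset.card_le_card (Finset.filter_subset_filter _ X.2.1)
    exact Nat.sub_lt_sub_left (by omega) h1
  exact Subrelation.wf this (InvImage.wf _ Nat.lt_wfRel.wf)

@[reducible] noncomputable def canModel (Φ : Finset MF) : KModel where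
  W := CWorld Φ
  R := CR Φ
  V := fun n X => decide (MF.var n ∈ X.1)
  trans := CR_trans
  cwf := CR_cwf Φ

/-- boxing a context. -/
lemma box_imps {L : List MF} {C : MF} (h : GLPrv (imps L C)) :
    GLPrv (imps (L.map MF.box) (MF.box C)) := by
  have h0 : GLPrv (MF.box (imps L C)) := .nec h
  suffices ht : GLPrv (imp (MF.box (imps L C)) (imps (L.map MF.box) (MF.box C))) from .mp ht h0
  clear h h0
  induction L with
  | nil => exact taut_id _
  | cons a L ih =>
    show GLPrv (imps [MF.box (imp a (imps L C)), MF.box a] (imps (L.map MF.box) (MF.box C)))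
    have hZ : GLPrv (imps [MF.box (imp a (imps L C)), MF.box a] (MF.box (imps L C))) :=
      imps_mp (imps_mp (imps_of _ (.k a (imps L C))) (imps_ax (by simp))) (imps_ax (by simp))
    exact imps_mp (imps_of _ ih) hZ

/-- Truth lemma for the canonical model. -/
lemma truth_lemma (Φ : Finset MF) (hΦ : ∀ B ∈ Φ, subF B ⊆ Φ) :
    ∀ B, B ∈ Φ → ∀ X : CWorld Φ, ((canModel Φ).eval X B = true ↔ B ∈ X.1) := by
  classical
  intro B
  induction B with
  | var n =>
    intro h X
    show (decide (MF.var n ∈ X.1) = true) ↔ _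
    simp
  | fal =>
    intro h X
    simp only [KModel.eval_fal, Bool.false_eq_true, false_iff]
    intro hf
    exact X.2.2 (imps_ax (mem_ctx_pos hf))
  | imp B C ihB ihC =>
    intro h X
    have hB : B ∈ Φ := hΦ _ h (mem_subF_imp_left B C)
    have hC : C ∈ Φ := hΦ _ h (mem_subF_imp_right B C)
    rw [KModel.eval_imp_true, ihB hB X, ihC hC X]
    constructor
    · intro himp
      by_contra hnot
      have hneg : GLPrv (imps (ctx Φ X.1) (MF.neg (imp B C))) :=
        imps_ax (mem_ctx_neg h hnot)
      by_cases hBX : B ∈ X.1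
      · have hpos : GLPrv (imps (ctx Φ X.1) (imp B C)) :=
          imps_mp (imps_of _ (taut_k B C)) (imps_ax (mem_ctx_pos (himp hBX)))
        exact X.2.2 (imps_fal hneg hpos)
      · have hpos : GLPrv (imps (ctx Φ X.1) (imp B C)) :=
          imps_mp (imps_of _ (taut_neg_imp B C)) (imps_ax (mem_ctx_neg hB hBX))
        exact X.2.2 (imps_fal hneg hpos)
    · intro hmem hBX
      by_contra hCX
      have h1 : GLPrv (imps (ctx Φ X.1) C) :=
        imps_mp (imps_ax (mem_ctx_pos hmem)) (imps_ax (mem_ctx_pos hBX))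
      exact X.2.2 (imps_fal (imps_ax (mem_ctx_neg hC hCX)) h1)
  | box B ihB =>
    intro h X
    have hB : B ∈ Φ := hΦ _ h (mem_subF_box B)
    rw [KModel.eval_box]
    constructor
    · intro hall
      by_contra hnot
      -- construct a successor world refuting B
      set boxesL : List MF := (X.1.filter (fun D => isBox D = true)).toList with hboxesL
      set M0 : List MF := boxesL ++ boxesL.map MF.unbox with hM0
      set L0 : List MF := MF.box B :: MF.neg B :: M0 with hL0
      have hcon : ConGL L0 := by
        intro hf
        have h1 : GLPrv (imps (MF.neg B :: MF.box B :: M0) fal) :=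
          imps_subset hf (by intro a ha; rw [hL0] at ha; simp at ha ⊢; tauto)
        have h2 : GLPrv (imps (MF.box B :: M0) (imp (MF.neg B) fal)) := deduction_inv h1
        have h3 : GLPrv (imps (MF.box B :: M0) B) :=
          imps_mp (imps_of _ (taut_dne B)) h2
        have h4 : GLPrv (imps M0 (imp (MF.box B) B)) := deduction_inv h3
        have h5 : GLPrv (imps (M0.map MF.box) (MF.box (imp (MF.box B) B))) := box_imps h4
        have h6 : GLPrv (imps (M0.map MF.box) (MF.box B)) :=
          imps_mp (imps_of _ (.lob B)) h5
        have h7 : GLPrv (imps (boxesL ++ M0.map MF.box) (MF.box B)) :=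
          imps_subset h6 (by intro a ha; simp at ha ⊢; tauto)
        rw [imps_append] at h7
        have h8 : GLPrv (imps boxesL (MF.box B)) := by
          refine imps_mp_all h7 ?_
          intro m hm
          obtain ⟨D, hD, rfl⟩ := List.mem_map.1 hm
          rw [hM0] at hD
          rcases List.mem_append.1 hD with hD | hD
          · -- D ∈ boxesL : box-shaped
            have hbox : isBox D = true := by
              rw [hboxesL, Finset.mem_toList, Finset.mem_filter] at hD
              exact hD.2
            have h4' : GLPrv (imp (MF.box (MF.unbox D)) (MF.box (MF.box (MF.unbox D)))) :=
              box4 (MF.unbox D)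
            rw [← eq_box_unbox_of_isBox hbox] at h4'
            exact imps_mp (imps_of _ h4') (imps_ax hD)
          · obtain ⟨E, hE, rfl⟩ := List.mem_map.1 hD
            have hbox : isBox E = true := by
              rw [hboxesL, Finset.mem_toList, Finset.mem_filter] at hE
              exact hE.2
            rw [← eq_box_unbox_of_isBox hbox]
            exact imps_ax hE
        have h9 : GLPrv (imps (ctx Φ X.1) (MF.box B)) :=
          imps_subset h8 (by
            intro a ha
            rw [hboxesL, Finset.mem_toList, Finset.mem_filter] at ha
            exact mem_ctx_pos ha.1)
        exact X.2.2 (imps_fal (imps_ax (mem_ctx_neg h hnot)) h9)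
      obtain ⟨S, hSsub, hScon⟩ := lindenbaum Φ L0 hcon
      have hconS : ConGL (ctx Φ S) :=
        con_of_subset hScon (fun a ha => List.mem_append.2 (Or.inl ha))
      set Y : CWorld Φ := ⟨S, hSsub, hconS⟩ with hY
      have hmemY : ∀ a ∈ L0, a ∈ Φ → a ∈ S := by
        intro a ha haΦ
        by_contra hnotS
        exact not_con_of_mem (List.mem_append.2 (Or.inr ha))
          (List.mem_append.2 (Or.inl (mem_ctx_neg haΦ hnotS))) hScon
      have hnotY : ∀ a ∈ L0, MF.neg a ∈ L0 → False := fun a ha hna =>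
        not_con_of_mem (List.mem_append.2 (Or.inr ha)) (List.mem_append.2 (Or.inr hna)) hScon
      have hBnotS : B ∉ S := by
        intro hBS
        exact not_con_of_mem (List.mem_append.2 (Or.inl (mem_ctx_pos hBS)))
          (List.mem_append.2 (Or.inr (by rw [hL0]; simp))) hScon
      have hboxBS : MF.box B ∈ S := hmemY _ (by rw [hL0]; simp) h
      have hRXY : CR Φ X Y := by
        refine ⟨?_, B, hboxBS, hnot⟩
        intro C hC
        have hCbox : MF.box C ∈ boxesL := by
          rw [hboxesL, Finset.mem_toList, Finset.mem_filter]
          exact ⟨hC, by simp [isBox]⟩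
        have hCboxΦ : MF.box C ∈ Φ := X.2.1 hC
        have hCΦ : C ∈ Φ := hΦ _ hCboxΦ (mem_subF_box C)
        constructor
        · exact hmemY _ (by rw [hL0, hM0]; simp; tauto) hCboxΦ
        · refine hmemY _ ?_ hCΦ
          rw [hL0, hM0]
          simp only [List.mem_cons, List.mem_append, List.mem_map]
          right; right; right
          exact ⟨MF.box C, hCbox, rfl⟩
      have := hall Y hRXY
      rw [ihB hB Y] at this
      exact hBnotS this
    · intro hmem u hu
      exact (ihB hB u).2 ((hu.1 B hmem).2)

/-- Completeness of GL w.r.t. transitive conversely-well-founded models. -/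
theorem gl_completeness {G : MF} (h : ¬ GLPrv G) :
    ∃ (M : KModel) (w : M.W), M.eval w G = false := by
  classical
  have hΦ : ∀ B ∈ subF G, subF B ⊆ subF G := fun B hB => subF_closed hB
  have hcon : ConGL [MF.neg G] := by
    intro hf
    exact h (.mp (taut_dne G) hf)
  obtain ⟨S, hSsub, hScon⟩ := lindenbaum (subF G) [MF.neg G] hcon
  have hconS : ConGL (ctx (subF G) S) :=
    con_of_subset hScon (fun a ha => List.mem_append.2 (Or.inl ha))
  set X : CWorld (subF G) := ⟨S, hSsub, hconS⟩ with hX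
  have hGnotS : G ∉ S := by
    intro hGS
    exact not_con_of_mem (List.mem_append.2 (Or.inl (mem_ctx_pos hGS)))
      (List.mem_append.2 (Or.inr (by simp))) hScon
  refine ⟨canModel (subF G), X, ?_⟩
  have := truth_lemma (subF G) hΦ G (mem_subF_self G) X
  rcases Bool.eq_false_or_eq_true ((canModel (subF G)).eval X G) with ht | hf
  · exact absurd (this.1 ht) hGnotS
  · exact hf

end Canonical
section Surgery
open MF

lemma bool_ext {x y : Bool} (h : x = true ↔ y = true) : x = y := by
  cases x <;> cases y <;> simp_all

lemma KModel.eval_box_false (M : KModel) {w : M.W} {A : MF}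
    (h : ∃ u, M.R w u ∧ M.eval u A = false) : M.eval w (MF.box A) = false := by
  obtain ⟨u, hu, hf⟩ := h
  rcases Bool.eq_false_or_eq_true (M.eval w (MF.box A)) with h' | h'
  · rw [M.eval_box] at h'
    rw [h' u hu] at hf
    exact absurd hf (by simp)
  · exact h' 

variable (M : KModel) (a b : M.W) (n : ℕ)

def SR : (M.W ⊕ Fin n) → (M.W ⊕ Fin n) → Prop
  | .inl u, .inl v => M.R u v
  | .inl u, .inr _ => M.R u a ∨ u = a
  | .inr _, .inl v => M.R b v ∨ v = b
  | .inr j, .inr k => j < k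

variable {M a b n}

lemma SR_trans (hab : M.R a b) : ∀ {x y z}, SR M a b n x y → SR M a b n y z → SR M a b n x z := by
  have hub : ∀ u, M.R u a ∨ u = a → M.R u b := by
    rintro u (h | rfl)
    exacts [M.trans h hab, hab]
  have hbv_na : ∀ v, M.R b v ∨ v = b → M.R v a ∨ v = a → False := by
    rintro v (h1 | rfl) (h2 | rfl)
    · exact M.asymm hab (M.trans h1 h2)
    · exact M.asymm hab h1
    · exact M.asymm hab h2
    · exact M.irrefl _ hab
  rintro (u | j) (v | j') (w | j'') h1 h2 <;> simp only [SR] at *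
  · exact M.trans h1 h2
  · rcases h2 with h2 | rfl
    exacts [Or.inl (M.trans h1 h2), Or.inl h1]
  · rcases h2 with h2 | rfl
    exacts [M.trans (hub u h1) h2, hub u h1]
  · exact h1
  · rcases h1 with h1 | rfl
    exacts [Or.inl (M.trans h1 h2), Or.inl h2]
  · exact absurd h2 (fun h2 => hbv_na v h1 h2)
  · exact h2
  · exact lt_trans h1 h2

lemma SR_cwf (hab : M.R a b) : WellFounded (fun x y => SR M a b n y x) := by
  set r : (M.W ⊕ Fin n) → (M.W ⊕ Fin n) → Prop := fun x y => SR M a b n y x with hr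
  have acc_down : ∀ v : M.W, (M.R b v ∨ v = b) → Acc r (Sum.inl v) := by
    intro v
    induction v using WellFounded.induction M.cwf with
    | _ v ih =>
      intro hv
      constructor
      rintro (w | k) hx
      · refine ih w hx ?_
        rcases hv with hv | rfl
        exacts [Or.inl (M.trans hv hx), Or.inl hx]
      · exfalso
        rcases hv with hv | rfl <;> rcases hx with hx | rfl
        · exact M.asymm hab (M.trans hv hx)
        · exact M.asymm hab hv
        · exact M.asymm hab hx
        · exact M.irrefl _ hab
  have acc_inr : ∀ (m : ℕ) (k : Fin n), n - k.val ≤ m → Acc r (Sum.inr k) := by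
    intro m
    induction m with
    | zero => intro k hk; exact absurd hk (by omega)
    | succ m ih =>
      intro k hk
      constructor
      rintro (v | j) hx
      · exact acc_down v hx
      · have hkj : (k : ℕ) < (j : ℕ) := hx
        have := j.isLt; have := k.isLt
        exact ih j (by omega)
  have acc_inl : ∀ u : M.W, Acc r (Sum.inl u) := by
    intro u
    induction u using WellFounded.induction M.cwf with
    | _ u ih =>
      constructor
      rintro (v | k) hx
      · exact ih v hx
      · exact acc_inr (n - k.val) k le_rfl
  constructor
  rintro (u | k)
  · exact acc_inl u
  · exact acc_inr (n - k.val) k le_rfl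

@[reducible] noncomputable def surgModel (hab : M.R a b) : KModel where
  W := M.W ⊕ Fin n
  R := SR M a b n
  V := fun m => Sum.elim (M.V m) (fun _ => M.V m b)
  trans := SR_trans hab
  cwf := SR_cwf hab

lemma surg_eval (hab : M.R a b) (F : MF) (htr : ∀ D, MF.box D ∈ subF F →
      M.eval b (MF.box D) = true → M.eval b D = true) :
    ∀ D ∈ subF F,
      (∀ u, (surgModel (n := n) hab).eval (Sum.inl u) D = M.eval u D) ∧
      (∀ k : Fin n, (surgModel (n := n) hab).eval (Sum.inr k) D = M.eval b D) := by
  intro D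
  induction D with
  | var m => intro _; exact ⟨fun u => rfl, fun k => rfl⟩
  | fal => intro _; exact ⟨fun u => rfl, fun k => rfl⟩
  | imp B C ihB ihC =>
    intro h
    have hB := ihB (subF_closed h (mem_subF_imp_left B C))
    have hC := ihC (subF_closed h (mem_subF_imp_right B C))
    constructor
    · intro u
      show (!(surgModel (n := n) hab).eval (Sum.inl u) B || _) = (!(M.eval u B) || _)
      rw [hB.1 u, hC.1 u]
    · intro k
      show (!(surgModel (n := n) hab).eval (Sum.inr k) B || _) = (!(M.eval b B) || _)
      rw [hB.2 k, hC.2 k]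
  | box B ihB =>
    intro h
    have hBsub : B ∈ subF F := subF_closed h (mem_subF_box B)
    have ih := ihB hBsub
    constructor
    · intro u
      apply bool_ext
      rw [KModel.eval_box, M.eval_box]
      constructor
      · intro h1 v hv
        have := h1 (Sum.inl v) hv
        rwa [ih.1 v] at this
      · intro h1 x hx
        cases x with
        | inl v => rw [ih.1 v]; exact h1 v hx
        | inr k =>
          rw [ih.2 k]
          have hub : M.R u b := by
            rcases hx with hx | rfl
            exacts [M.trans hx hab, hab]
          exact h1 b hub
    · intro k
      apply bool_ext
      rw [KModel.eval_box, M.eval_box]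
      constructor
      · intro h1 v hv
        have := h1 (Sum.inl v) (Or.inl hv)
        rwa [ih.1 v] at this
      · intro h1 x hx
        have hbox : M.eval b (MF.box B) = true := (M.eval_box b B).2 h1
        have hb : M.eval b B = true := htr B h hbox
        cases x with
        | inl v =>
          rw [ih.1 v]
          rcases hx with hx | rfl
          exacts [h1 v hx, hb]
        | inr j => rw [ih.2 j]; exact hb

end Surgery
section Main
open MF

lemma chain_exists (M : KModel) :
    ∀ (s : ℕ) (w : M.W), M.eval w (boxn s fal) = false →
      ∃ c : ℕ → M.W, c 0 = w ∧ ∀ i < s, M.R (c i) (c (i+1)) := by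
  intro s
  induction s with
  | zero => intro w _; exact ⟨fun _ => w, rfl, by omega⟩
  | succ s ih =>
    intro w hw
    have hex : ∃ u, M.R w u ∧ M.eval u (boxn s fal) = false := by
      by_contra hno
      push_neg at hno
      have : M.eval w (MF.box (boxn s fal)) = true := (M.eval_box _ _).2 (fun u hu => by
        rcases Bool.eq_false_or_eq_true (M.eval u (boxn s fal)) with h | h
        · exact h
        · exact absurd h (hno u hu))
      rw [show MF.box (boxn s fal) = boxn (s+1) fal from rfl, hw] at this
      exact absurd this (by simp)
    obtain ⟨u, hu, hu2⟩ := hex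
    obtain ⟨c', hc0, hcadj⟩ := ih u hu2
    refine ⟨fun i => if i = 0 then w else c' (i-1), by simp, ?_⟩
    intro i hi
    cases i with
    | zero => simp [hc0]; exact hc0 ▸ hu
    | succ j => simpa using hcadj j (by omega)

lemma chain_trans (M : KModel) (c : ℕ → M.W) (s : ℕ)
    (hadj : ∀ i < s, M.R (c i) (c (i+1))) :
    ∀ i j, j ≤ s → i < j → M.R (c i) (c j) := by
  intro i j
  induction j with
  | zero => omega
  | succ j ihj =>
    intro hj hij
    rcases Nat.lt_or_ge i j with h | h
    · exact M.trans (ihj (by omega) h) (hadj j (by omega))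
    · have : i = j := by omega
      subst this
      exact hadj i (by omega)

lemma semantic_step (A : MF) (s N : ℕ) (hs : MF.cx A < s)
    (hN : GLPrv (imp (MF.box A) (boxn N fal))) :
    GLPrv (imp (MF.box A) (boxn s fal)) := by
  classical
  rcases le_or_gt N s with hle | hlt
  · exact imp_trans hN (boxn_fal_mono hle)
  by_contra hG
  obtain ⟨M, w0, hw0⟩ := gl_completeness hG
  have hbox : M.eval w0 (MF.box A) = true := by
    rcases Bool.eq_false_or_eq_true (M.eval w0 (MF.box A)) with h | h
    · exact h
    · rw [KModel.eval_imp, h] at hw0; simp at hw0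
  have hfals : M.eval w0 (boxn s fal) = false := by
    rcases Bool.eq_false_or_eq_true (M.eval w0 (boxn s fal)) with h | h
    · rw [KModel.eval_imp, h, hbox] at hw0; simp at hw0
    · exact h
  obtain ⟨c, hc0, hadj⟩ := chain_exists M s w0 hfals
  set t : ℕ → Finset MF :=
    fun i => (subF A).filter (fun D => isBox D = true ∧ M.eval (c i) D = true) with ht
  have hmono : ∀ i < s, t i ⊆ t (i+1) := by
    intro i hi D hD
    simp only [ht, Finset.mem_filter] at hD ⊢
    obtain ⟨h1, h2, h3⟩ := hD
    have hDbox : D = MF.box (MF.unbox D) := eq_box_unbox_of_isBox h2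
    have hper := M.box_persist (hadj i hi) (A := MF.unbox D) (by rwa [← hDbox])
    exact ⟨h1, h2, by rw [hDbox]; exact hper.1⟩
  have hfound : ∃ i, i < s ∧ t i = t (i+1) := by
    by_contra hno
    push_neg at hno
    have hcard : ∀ i ≤ s, i ≤ (t i).card := by
      intro i
      induction i with
      | zero => intro _; exact Nat.zero_le _
      | succ i ihi =>
        intro hi
        have hss : t i ⊂ t (i+1) :=
          Finset.ssubset_iff_subset_ne.2 ⟨hmono i (by omega), hno i (by omega)⟩
        have hlt := Finset.card_lt_card hss
        have := ihi (by omega)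
        omega
    have h1 := hcard s le_rfl
    have h2 : (t s).card ≤ MF.cx A := by
      show (t s).card ≤ ((subF A).filter (fun B => isBox B = true)).card
      apply Finset.card_le_card
      intro D hD
      simp only [ht, Finset.mem_filter] at hD
      exact Finset.mem_filter.2 ⟨hD.1, hD.2.1⟩
    omega
  obtain ⟨i, hi, heq⟩ := hfound
  have hab : M.R (c i) (c (i+1)) := hadj i hi
  have hw0b : M.R w0 (c (i+1)) := by
    rcases Nat.eq_zero_or_pos i with h0 | hpos
    · subst h0; exact hc0 ▸ hab
    · have := chain_trans M c s hadj 0 (i+1) (by omega) (by omega)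
      rwa [hc0] at this
  have hpersist := M.box_persist hw0b hbox
  have htr : ∀ D, MF.box D ∈ subF (MF.box A) →
      M.eval (c (i+1)) (MF.box D) = true → M.eval (c (i+1)) D = true := by
    intro D hD hbD
    have hD' : MF.box D = MF.box A ∨ MF.box D ∈ subF A := by simpa [subF] using hD
    rcases hD' with heqD | hmem
    · have hDA : D = A := by injection heqD
      subst hDA
      exact hpersist.2
    · have hmem_t : MF.box D ∈ t (i+1) := by
        simp only [ht, Finset.mem_filter]
        exact ⟨hmem, rfl, hbD⟩
      rw [← heq] at hmem_t
      have h_at_a : M.eval (c i) (MF.box D) = true := by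
        simp only [ht, Finset.mem_filter] at hmem_t
        exact hmem_t.2.2
      exact (M.box_persist hab h_at_a).2
  -- surgery
  have hsurg := surg_eval (n := N) hab (MF.box A) htr
  set M' := surgModel (n := N) hab with hM'
  have hboxA' : M'.eval (Sum.inl w0) (MF.box A) = true := by
    rw [(hsurg (MF.box A) (mem_subF_self _)).1 w0]
    exact hbox
  have hinr : ∀ (m : ℕ) (j : Fin N), (j : ℕ) + m < N →
      M'.eval (Sum.inr j) (boxn m fal) = false := by
    intro m
    induction m with
    | zero => intro j _; rfl
    | succ m ihm =>
      intro j hj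
      apply M'.eval_box_false
      refine ⟨Sum.inr ⟨(j : ℕ) + 1, by omega⟩, ?_, ihm _ (by simp; omega)⟩
      exact Nat.lt_succ_self _
  have hchain' : M'.eval (Sum.inl w0) (boxn N fal) = false := by
    obtain ⟨K, rfl⟩ : ∃ K, N = K + 1 := ⟨N - 1, by omega⟩
    apply M'.eval_box_false
    refine ⟨Sum.inr ⟨0, by omega⟩, ?_, hinr K ⟨0, by omega⟩ (by simp)⟩
    show M.R w0 (c i) ∨ w0 = c i
    rcases Nat.eq_zero_or_pos i with h0 | hpos
    · subst h0; exact Or.inr hc0.symm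
    · have := chain_trans M c s hadj 0 i (by omega) hpos
      rw [hc0] at this
      exact Or.inl this
  have hsound := gl_soundness hN M' (Sum.inl w0)
  rw [KModel.eval_imp_true] at hsound
  rw [hsound hboxA'] at hchain'
  exact absurd hchain' (by simp)

end Main

/-- For `s > cx A`: GL_ω ⊢ ¬□A iff GL + {¬F_s} ⊢ ¬□A. -/
theorem glomega_negbox_iff_glf (A : MF) (s : ℕ) (hs : s > MF.cx A) :
    GLomegaPrv (MF.neg (MF.box A)) ↔ GLFPrv s (MF.neg (MF.box A)) := by
  rw [glomega_iff, glf_iff]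
  constructor
  · rintro ⟨N, hN⟩
    have h1 : GLPrv (MF.imp (MF.box A) (MF.boxn N MF.fal)) := boxfal_of_dian hN
    have h2 : GLPrv (MF.imp (MF.box A) (MF.boxn s MF.fal)) := semantic_step A s N hs h1
    have h3 : GLPrv (MF.imp (MF.box A) (Fmla s)) :=
      imp_trans h2 (taut_k (MF.boxn (s+1) MF.fal) (MF.boxn s MF.fal))
    exact .mp (taut_contra1 _ _) h3
  · intro h
    have h1 : GLPrv (MF.imp (MF.box A) (Fmla s)) := .mp (taut_contra2 _ _) h
    have h2 := lob_trick h1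
    exact ⟨s + 1, dian_of_boxfal h2⟩
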